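/- Let Σ be a set of pairs of words over ℕ in which every pair is balanced, and let u, v be words over ℕ. If every finite nil semigroup that satisfies all identities in Σ also satisfies the identity (u,v), then (u,v) belongs to the fully invariant congruence Λ generated by Σ; equivalently, every semigroup satisfying all identities in Σ satisfies the identity (u,v). -/

import Mathlib

/-- A semigroup `S` satisfies the identity `(u, v)` over the alphabet `X` if every map
`X → S` sends `u` and `v` (under the induced semigroup homomorphism) to the same
element. -/
def SatisfiesId (S : Type*) [Semigroup S] {X : Type*}
    (p : FreeSemigroup X × FreeSemigroup X) : Prop :=
  ∀ σ : X → S, FreeSemigroup.lift σ p.1 = FreeSemigroup.lift σ p.2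

/-- `spow x n` is the power `x ^ (n + 1)` in a semigroup. -/
def spow {S : Type*} [Semigroup S] (x : S) : ℕ → S
  | 0 => x
  | n + 1 => spow x n * x

/-- `z` is an (absorbing) zero element of `S`. -/
def IsZeroElem {S : Type*} [Mul S] (z : S) : Prop :=
  ∀ s : S, z * s = z ∧ s * z = z

/-- A semigroup is nil if it has a zero element `z` and every element `x` has some power
`x ^ n`, `n ≥ 1`, equal to `z`. -/
def IsNilSemigroup (S : Type*) [Semigroup S] : Prop :=
  ∃ z : S, IsZeroElem z ∧ ∀ x : S, ∃ n : ℕ, spow x n = z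

/-- The fully invariant congruence on `FreeSemigroup ℕ` generated by a set `E` of pairs
of words: the congruence generated by all pairs `(φ u, φ v)` with `(u, v) ∈ E` and `φ` a
semigroup endomorphism of `FreeSemigroup ℕ`. -/
def ficCongruence (E : Set (FreeSemigroup ℕ × FreeSemigroup ℕ)) : Con (FreeSemigroup ℕ) :=
  conGen (fun a b => ∃ p ∈ E, ∃ φ : FreeSemigroup ℕ →ₙ* FreeSemigroup ℕ,
    a = φ p.1 ∧ b = φ p.2)

/-- The list of letters of a word in the free semigroup on `ℕ`. -/
def wordLetters (u : FreeSemigroup ℕ) : List ℕ := u.head :: u.tail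

/-- A pair of words over `ℕ` is balanced if every letter occurs the same number of times
in both components. -/
def BalancedPair (p : FreeSemigroup ℕ × FreeSemigroup ℕ) : Prop :=
  ∀ x : ℕ, (wordLetters p.1).count x = (wordLetters p.2).count x

open FreeSemigroup

theorem wordLetters_mul (a b : FreeSemigroup ℕ) :
    wordLetters (a * b) = wordLetters a ++ wordLetters b := rfl

theorem wordLetters_of (x : ℕ) : wordLetters (of x) = [x] := rfl

theorem wordLetters_hom (φ : FreeSemigroup ℕ →ₙ* FreeSemigroup ℕ) (w : FreeSemigroup ℕ) :
    wordLetters (φ w) = (wordLetters w).flatMap (fun x => wordLetters (φ (of x))) := by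
  induction w using FreeSemigroup.recOnMul with
  | ih1 x => simp [wordLetters_of]
  | ih2 a b ha hb =>
      rw [map_mul, wordLetters_mul, wordLetters_mul, List.flatMap_append, ha, hb]

/-- The congruence of having permuted letter lists. -/
def permCon : Con (FreeSemigroup ℕ) where
  r a b := (wordLetters a).Perm (wordLetters b)
  iseqv := ⟨fun _ => List.Perm.refl _, List.Perm.symm, List.Perm.trans⟩
  mul' {a b c d} h1 h2 := by
    show (wordLetters (a*c)).Perm (wordLetters (b*d))
    rw [wordLetters_mul, wordLetters_mul]
    exact List.Perm.append h1 h2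

theorem con_perm {E : Set (FreeSemigroup ℕ × FreeSemigroup ℕ)}
    (hE : ∀ p ∈ E, BalancedPair p) {a b : FreeSemigroup ℕ}
    (hab : ficCongruence E a b) : (wordLetters a).Perm (wordLetters b) := by
  refine (Con.conGen_le.mpr ?_ : ficCongruence E ≤ permCon) hab
  rintro x y ⟨p, hp, φ, rfl, rfl⟩
  show (wordLetters (φ p.1)).Perm (wordLetters (φ p.2))
  rw [wordLetters_hom, wordLetters_hom]
  exact (List.perm_iff_count.mpr (hE p hp)).flatMap_right _

section Main

variable (E : Set (FreeSemigroup ℕ × FreeSemigroup ℕ)) (u v : FreeSemigroup ℕ)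
  (hE : ∀ p ∈ E, BalancedPair p)

/-- The quotient of the free semigroup by the fully invariant congruence. -/
abbrev QQ := (ficCongruence E).Quotient

/-- The multiset of letters of a class in the quotient. -/
def lettersQ : QQ E → Multiset ℕ :=
  Quotient.lift (fun w => (wordLetters w : Multiset ℕ))
    (fun _ _ hab => Multiset.coe_eq_coe.mpr (con_perm hE hab))

@[simp] theorem lettersQ_mk (w : FreeSemigroup ℕ) :
    lettersQ E hE (↑w : QQ E) = (wordLetters w : Multiset ℕ) := rfl

theorem lettersQ_mul (a b : QQ E) :
    lettersQ E hE (a * b) = lettersQ E hE a + lettersQ E hE b := by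
  induction a using Con.induction_on with
  | H a =>
  induction b using Con.induction_on with
  | H b =>
  rw [← Con.coe_mul, lettersQ_mk, lettersQ_mk, lettersQ_mk, wordLetters_mul]
  exact congrArg _ rfl

theorem card_lettersQ_pos (q : QQ E) : 0 < (lettersQ E hE q).card := by
  induction q using Con.induction_on with
  | H w => simp [wordLetters]

/-- The length bound. -/
def NN : ℕ := max (wordLetters u).length (wordLetters v).length

/-- The alphabet. -/
def AA : Finset ℕ := (wordLetters u ++ wordLetters v).toFinset

/-- The predicate cutting out the finite Rees quotient. -/
def PP (q : QQ E) : Prop :=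
  (lettersQ E hE q).card ≤ NN u v ∧ ∀ x ∈ lettersQ E hE q, x ∈ AA u v

theorem PP_mul_left {a b : QQ E} (h : PP E u v hE (a * b)) : PP E u v hE a := by
  obtain ⟨h1, h2⟩ := h
  rw [lettersQ_mul, Multiset.card_add] at h1
  constructor
  · exact le_trans (Nat.le_add_right _ _) h1
  · intro x hx
    exact h2 x (by rw [lettersQ_mul]; exact Multiset.mem_add.mpr (Or.inl hx))

theorem PP_mul_right {a b : QQ E} (h : PP E u v hE (a * b)) : PP E u v hE b := by
  obtain ⟨h1, h2⟩ := h
  rw [lettersQ_mul, Multiset.card_add] at h1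
  constructor
  · exact le_trans (Nat.le_add_left _ _) h1
  · intro x hx
    exact h2 x (by rw [lettersQ_mul]; exact Multiset.mem_add.mpr (Or.inr hx))

/-- The finite nil semigroup: the Rees quotient. -/
abbrev SS := Option {q : QQ E // PP E u v hE q}

open Classical in
noncomputable instance : Mul (SS E u v hE) :=
  ⟨fun a b => match a, b with
    | some a, some b =>
        if h : PP E u v hE (a.1 * b.1) then some ⟨a.1 * b.1, h⟩ else none
    | none, _ => none
    | some _, none => none⟩

theorem SS_none_mul (a : SS E u v hE) : (none : SS E u v hE) * a = none := rfl

theorem SS_mul_none (a : SS E u v hE) : a * (none : SS E u v hE) = none := by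
  cases a <;> rfl

open Classical in
theorem SS_some_mul_some (a b : {q : QQ E // PP E u v hE q}) :
    (some a : SS E u v hE) * some b =
      if h : PP E u v hE (a.1 * b.1) then some ⟨a.1 * b.1, h⟩ else none := rfl

noncomputable instance instSemigroupSS : Semigroup (SS E u v hE) where
  mul_assoc a b c := by
    classical
    rcases a with _ | a
    · rw [SS_none_mul, SS_none_mul, SS_none_mul]
    rcases b with _ | b
    · rw [SS_mul_none, SS_none_mul, SS_mul_none]
    rcases c with _ | c
    · rw [SS_mul_none, SS_mul_none, SS_mul_none]
    rw [SS_some_mul_some E u v hE a b, SS_some_mul_some E u v hE b c]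
    by_cases hab : PP E u v hE (a.1 * b.1)
    · rw [dif_pos hab, SS_some_mul_some]
      by_cases hbc : PP E u v hE (b.1 * c.1)
      · rw [dif_pos hbc, SS_some_mul_some]
        have : a.1 * b.1 * c.1 = a.1 * (b.1 * c.1) := mul_assoc _ _ _
        by_cases habc : PP E u v hE (a.1 * b.1 * c.1)
        · rw [dif_pos habc, dif_pos (this ▸ habc)]
          exact congrArg some (Subtype.ext this)
        · rw [dif_neg habc, dif_neg (fun hc => habc (this ▸ hc))]
      · rw [dif_neg hbc, SS_mul_none]
        refine dif_neg fun hc => hbc ?_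
        exact PP_mul_right E u v hE (mul_assoc a.1 b.1 c.1 ▸ hc)
    · rw [dif_neg hab, SS_none_mul]
      by_cases hbc : PP E u v hE (b.1 * c.1)
      · rw [dif_pos hbc, SS_some_mul_some]
        symm
        refine dif_neg fun hc => hab ?_
        exact PP_mul_left E u v hE ((mul_assoc a.1 b.1 c.1).symm ▸ hc)
      · rw [dif_neg hbc, SS_mul_none]


theorem SS_zero : IsZeroElem (none : SS E u v hE) :=
  fun s => ⟨SS_none_mul E u v hE s, SS_mul_none E u v hE s⟩

theorem SS_nil : IsNilSemigroup (SS E u v hE) := by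
  classical
  refine ⟨none, SS_zero E u v hE, ?_⟩
  rintro (_ | a)
  · exact ⟨0, rfl⟩
  · refine ⟨NN u v, ?_⟩
    have key : ∀ n : ℕ, spow (some a : SS E u v hE) n = none ∨
        ∃ b : {q : QQ E // PP E u v hE q},
          spow (some a : SS E u v hE) n = some b ∧ n + 1 ≤ (lettersQ E hE b.1).card := by
      intro n
      induction n with
      | zero => exact Or.inr ⟨a, rfl, card_lettersQ_pos E hE a.1⟩
      | succ n ih =>
        have hstep : spow (some a : SS E u v hE) (n + 1) = spow (some a) n * some a := rfl
        rcases ih with h | ⟨b, hb, hcard⟩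
        · left; rw [hstep, h, SS_none_mul]
        · rw [hstep, hb, SS_some_mul_some]
          by_cases hc : PP E u v hE (b.1 * a.1)
          · refine Or.inr ⟨⟨b.1 * a.1, hc⟩, dif_pos hc, ?_⟩
            rw [lettersQ_mul, Multiset.card_add]
            have := card_lettersQ_pos E hE a.1
            omega
          · exact Or.inl (dif_neg hc)
    rcases key (NN u v) with h | ⟨b, hb, hcard⟩
    · exact h
    · exact absurd (le_trans hcard b.2.1) (by omega)

theorem SS_finite : Finite (SS E u v hE) := by
  have hL : {l : List ℕ | l.length ≤ NN u v ∧ ∀ x ∈ l, x ∈ AA u v}.Finite := by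
    have h1 : {l : List {x // x ∈ AA u v} | l.length ≤ NN u v}.Finite :=
      List.finite_length_le _ _
    refine (h1.image (List.map Subtype.val)).subset ?_
    rintro l ⟨hlen, hmem⟩
    refine ⟨l.pmap (fun x hx => ⟨x, hx⟩) hmem, ?_, ?_⟩
    · simpa using hlen
    · simp [List.map_pmap]
  have hinj : Function.Injective wordLetters := by
    rintro ⟨a, la⟩ ⟨b, lb⟩ hab
    simpa [wordLetters, FreeSemigroup.ext_iff] using hab
  have hW : (wordLetters ⁻¹' {l : List ℕ | l.length ≤ NN u v ∧ ∀ x ∈ l, x ∈ AA u v}).Finite :=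
    hL.preimage hinj.injOn
  have hQ : {q : QQ E | PP E u v hE q}.Finite := by
    refine Set.Finite.subset (Set.Finite.image (fun w : FreeSemigroup ℕ => (w : QQ E)) hW) ?_
    intro q hq
    induction q using Con.induction_on with
    | H w =>
      refine ⟨w, ?_, rfl⟩
      obtain ⟨h1, h2⟩ := hq
      rw [lettersQ_mk] at h1 h2
      exact ⟨by simpa using h1, by simpa using h2⟩
  have : Finite {q : QQ E // PP E u v hE q} := hQ.to_subtype
  exact Finite.of_equiv _ (Equiv.optionEquivSumPUnit.{0,0} _).symm

/-- Choice of representatives for a map into `SS`. -/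
noncomputable def tauF (σ : ℕ → SS E u v hE) : ℕ → FreeSemigroup ℕ := fun x =>
  match σ x with
  | some q => Quotient.out q.1
  | none => FreeSemigroup.of 0

theorem tauF_spec {σ : ℕ → SS E u v hE} {x : ℕ} {q} (hx : σ x = some q) :
    (↑(tauF E u v hE σ x) : QQ E) = q.1 := by
  unfold tauF
  rw [hx]
  exact Quotient.out_eq q.1

theorem lift_none {σ : ℕ → SS E u v hE} {w : FreeSemigroup ℕ} {x : ℕ}
    (hx : x ∈ wordLetters w) (h0 : σ x = none) :
    FreeSemigroup.lift σ w = none := by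
  induction w using FreeSemigroup.recOnMul with
  | ih1 y =>
    rw [wordLetters_of, List.mem_singleton] at hx
    subst hx
    rw [FreeSemigroup.lift_of, h0]
  | ih2 a b ha hb =>
    rw [map_mul]
    rw [wordLetters_mul, List.mem_append] at hx
    rcases hx with hx | hx
    · rw [ha hx, SS_none_mul]
    · rw [hb hx, SS_mul_none]

open Classical in
theorem dif_eq_of_eq {q1 q2 : QQ E} (hq : q1 = q2) :
    (if h : PP E u v hE q1 then (some ⟨q1, h⟩ : SS E u v hE) else none)
      = if h : PP E u v hE q2 then some ⟨q2, h⟩ else none := by subst hq; rfl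

open Classical in
theorem lift_eval {σ : ℕ → SS E u v hE} {w : FreeSemigroup ℕ}
    (hw : ∀ x ∈ wordLetters w, σ x ≠ none) :
    FreeSemigroup.lift σ w =
      if h : PP E u v hE (↑(FreeSemigroup.lift (tauF E u v hE σ) w)) then
        some ⟨↑(FreeSemigroup.lift (tauF E u v hE σ) w), h⟩ else none := by
  induction w using FreeSemigroup.recOnMul with
  | ih1 x =>
    have hx := hw x (by rw [wordLetters_of]; exact List.mem_singleton_self x)
    obtain ⟨q, hq⟩ := Option.ne_none_iff_exists'.mp hx
    rw [FreeSemigroup.lift_of, FreeSemigroup.lift_of, hq]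
    have ht : (↑(tauF E u v hE σ x) : QQ E) = q.1 := tauF_spec E u v hE hq
    simp only [ht, dif_pos q.2]
  | ih2 a' b ha hb =>
    set a : FreeSemigroup ℕ := FreeSemigroup.of a' with hadef
    have hwa : ∀ x ∈ wordLetters a, σ x ≠ none := fun x hx =>
      hw x (by rw [wordLetters_mul]; exact List.mem_append_left _ hx)
    have hwb : ∀ x ∈ wordLetters b, σ x ≠ none := fun x hx =>
      hw x (by rw [wordLetters_mul]; exact List.mem_append_right _ hx)
    rw [map_mul, ha hwa, hb hwb]
    have hco : (↑(FreeSemigroup.lift (tauF E u v hE σ) (a * b)) : QQ E)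
        = (↑(FreeSemigroup.lift (tauF E u v hE σ) a) : QQ E)
          * ↑(FreeSemigroup.lift (tauF E u v hE σ) b) := by
      rw [map_mul, Con.coe_mul]
    by_cases h1 : PP E u v hE ↑(FreeSemigroup.lift (tauF E u v hE σ) a)
    · by_cases h2 : PP E u v hE ↑(FreeSemigroup.lift (tauF E u v hE σ) b)
      · rw [dif_pos h1, dif_pos h2, SS_some_mul_some, dif_eq_of_eq E u v hE hco.symm]
      · rw [dif_pos h1, dif_neg h2, SS_mul_none]
        symm
        refine dif_neg fun hc => h2 ?_
        exact PP_mul_right E u v hE (hco ▸ hc)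
    · rw [dif_neg h1, SS_none_mul]
      symm
      refine dif_neg fun hc => h1 ?_
      exact PP_mul_left E u v hE (hco ▸ hc)

theorem satE {p} (hp : p ∈ E) : SatisfiesId (SS E u v hE) p := by
  intro σ
  by_cases hz : ∃ x ∈ wordLetters p.1, σ x = none
  · obtain ⟨x, hx1, hx0⟩ := hz
    have hx2 : x ∈ wordLetters p.2 := by
      have hc := hE p hp x
      have : 0 < (wordLetters p.2).count x := by
        rw [← hc]; exact List.count_pos_iff.mpr hx1
      exact List.count_pos_iff.mp this
    rw [lift_none E u v hE hx1 hx0, lift_none E u v hE hx2 hx0]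
  · push_neg at hz
    have hz2 : ∀ x ∈ wordLetters p.2, σ x ≠ none := by
      intro x hx
      refine hz x ?_
      have hc := hE p hp x
      have : 0 < (wordLetters p.1).count x := by
        rw [hc]; exact List.count_pos_iff.mpr hx
      exact List.count_pos_iff.mp this
    rw [lift_eval E u v hE hz, lift_eval E u v hE hz2]
    have hco : (↑(FreeSemigroup.lift (tauF E u v hE σ) p.1) : QQ E)
        = ↑(FreeSemigroup.lift (tauF E u v hE σ) p.2) := by
      rw [Con.eq]
      exact ConGen.Rel.of _ _ ⟨p, hp, FreeSemigroup.lift (tauF E u v hE σ), rfl, rfl⟩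
    exact dif_eq_of_eq E u v hE hco

theorem lift_coe_eq {f : ℕ → FreeSemigroup ℕ} {w : FreeSemigroup ℕ}
    (hf : ∀ x ∈ wordLetters w, (↑(f x) : QQ E) = ↑(FreeSemigroup.of x)) :
    (↑(FreeSemigroup.lift f w) : QQ E) = ↑w := by
  induction w using FreeSemigroup.recOnMul with
  | ih1 x =>
    rw [FreeSemigroup.lift_of]
    exact hf x (by rw [wordLetters_of]; exact List.mem_singleton_self x)
  | ih2 a b ha hb =>
    rw [map_mul, Con.coe_mul, Con.coe_mul,
      ha (fun x hx => hf x (by rw [wordLetters_mul]; exact List.mem_append_left _ hx)),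
      hb (fun x hx => hf x (by rw [wordLetters_mul]; exact List.mem_append_right _ hx))]

theorem all_of_con {S : Semigrp} (hS : ∀ p ∈ E, SatisfiesId S p)
    (huv : ficCongruence E u v) : SatisfiesId S (u, v) := by
  intro σ
  let c : Con (FreeSemigroup ℕ) :=
    { r := fun a b => FreeSemigroup.lift σ a = FreeSemigroup.lift σ b
      iseqv := ⟨fun _ => rfl, Eq.symm, Eq.trans⟩
      mul' := fun {a b x y} h1 h2 => by
        show FreeSemigroup.lift σ (a * x) = FreeSemigroup.lift σ (b * y)
        rw [map_mul, map_mul]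
        rw [show FreeSemigroup.lift σ a = FreeSemigroup.lift σ b from h1,
          show FreeSemigroup.lift σ x = FreeSemigroup.lift σ y from h2] }
  have hle : ficCongruence E ≤ c := by
    refine Con.conGen_le.mpr ?_
    rintro a b ⟨p, hp, φ, rfl, rfl⟩
    show FreeSemigroup.lift σ (φ p.1) = FreeSemigroup.lift σ (φ p.2)
    have hcomp : ∀ w, FreeSemigroup.lift σ (φ w)
        = FreeSemigroup.lift (fun x => FreeSemigroup.lift σ (φ (FreeSemigroup.of x))) w := by
      intro w
      induction w using FreeSemigroup.recOnMul with
      | ih1 x => rw [FreeSemigroup.lift_of]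
      | ih2 a b ha hb => rw [map_mul, map_mul, map_mul, ha, hb]
    rw [hcomp, hcomp]
    exact hS p hp _
  exact hle huv

theorem satisfiesId_of_mulEquiv {S T : Type*} [Semigroup S] [Semigroup T] (e : S ≃* T)
    {p : FreeSemigroup ℕ × FreeSemigroup ℕ} (hp : SatisfiesId S p) : SatisfiesId T p := by
  intro σ
  have hcomp : ∀ w : FreeSemigroup ℕ,
      FreeSemigroup.lift σ w = e (FreeSemigroup.lift (fun x => e.symm (σ x)) w) := by
    intro w
    induction w using FreeSemigroup.recOnMul with
    | ih1 x => rw [FreeSemigroup.lift_of, FreeSemigroup.lift_of, e.apply_symm_apply]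
    | ih2 a b ha hb => rw [map_mul, map_mul, map_mul, ha, hb]
  rw [hcomp, hcomp, hp (fun x => e.symm (σ x))]

theorem spow_map {S T : Type*} [Semigroup S] [Semigroup T] (e : S ≃* T) (x : S) :
    ∀ n, e (spow x n) = spow (e x) n
  | 0 => rfl
  | n + 1 => by rw [show spow x (n+1) = spow x n * x from rfl, map_mul, spow_map e x n]; rfl

theorem isNil_of_mulEquiv {S T : Type*} [Semigroup S] [Semigroup T] (e : S ≃* T)
    (hS : IsNilSemigroup S) : IsNilSemigroup T := by
  obtain ⟨z, hz, hn⟩ := hS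
  refine ⟨e z, fun t => ?_, fun t => ?_⟩
  · constructor
    · rw [show t = e (e.symm t) from (e.apply_symm_apply t).symm, ← map_mul,
        (hz (e.symm t)).1]
    · rw [show t = e (e.symm t) from (e.apply_symm_apply t).symm, ← map_mul,
        (hz (e.symm t)).2]
  · obtain ⟨n, hn'⟩ := hn (e.symm t)
    exact ⟨n, by rw [← e.apply_symm_apply t, ← spow_map e, hn']⟩


/-- If every pair in `E` is balanced and every finite nil semigroup satisfying all
identities in `E` also satisfies the identity `(u, v)`, then `(u, v)` belongs to the
fully invariant congruence generated by `E`; equivalently, every semigroup satisfying all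
identities in `E` satisfies `(u, v)`. -/
theorem nil_implies_all (E : Set (FreeSemigroup ℕ × FreeSemigroup ℕ))
    (hE : ∀ p ∈ E, BalancedPair p) (u v : FreeSemigroup ℕ)
    (h : ∀ S : Semigrp, Finite S → IsNilSemigroup S →
      (∀ p ∈ E, SatisfiesId S p) → SatisfiesId S (u, v)) :
    ficCongruence E u v
      ∧ ∀ S : Semigrp, (∀ p ∈ E, SatisfiesId S p) → SatisfiesId S (u, v) := by
  classical
  have hQuv : ficCongruence E u v := by
    have hfin : Finite (SS E u v hE) := SS_finite E u v hE
    have key' := h (Semigrp.of (ULift.{_} (SS E u v hE)))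
      (Finite.of_equiv _ Equiv.ulift.symm)
      (isNil_of_mulEquiv MulEquiv.ulift.symm (SS_nil E u v hE))
      (fun p hp => satisfiesId_of_mulEquiv MulEquiv.ulift.symm (satE E u v hE hp))
    have key : SatisfiesId (SS E u v hE) (u, v) :=
      satisfiesId_of_mulEquiv MulEquiv.ulift key'
    have hofP : ∀ x ∈ AA u v, PP E u v hE ↑(FreeSemigroup.of x) := by
      intro x hx
      constructor
      · rw [lettersQ_mk, wordLetters_of]
        show 1 ≤ NN u v
        exact le_trans (by simp [wordLetters]) (le_max_left _ _)
      · intro y hy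
        rw [lettersQ_mk, wordLetters_of] at hy
        rw [Multiset.mem_coe, List.mem_singleton] at hy
        subst hy
        exact hx
    set σ₀ : ℕ → SS E u v hE := fun x =>
      if hx : x ∈ AA u v then some ⟨↑(FreeSemigroup.of x), hofP x hx⟩ else none with hσ₀
    have hkey : FreeSemigroup.lift σ₀ u = FreeSemigroup.lift σ₀ v := key σ₀
    have hu_mem : ∀ x ∈ wordLetters u, x ∈ AA u v := fun x hx =>
      List.mem_toFinset.mpr (List.mem_append_left _ hx)
    have hv_mem : ∀ x ∈ wordLetters v, x ∈ AA u v := fun x hx =>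
      List.mem_toFinset.mpr (List.mem_append_right _ hx)
    have hσ₀some : ∀ x (hx : x ∈ AA u v),
        σ₀ x = some ⟨↑(FreeSemigroup.of x), hofP x hx⟩ := by
      intro x hx
      simp only [hσ₀]
      exact dif_pos hx
    have hnz_u : ∀ x ∈ wordLetters u, σ₀ x ≠ none := fun x hx => by
      rw [hσ₀some x (hu_mem x hx)]; exact Option.some_ne_none _
    have hnz_v : ∀ x ∈ wordLetters v, σ₀ x ≠ none := fun x hx => by
      rw [hσ₀some x (hv_mem x hx)]; exact Option.some_ne_none _
    have hco_u : (↑(FreeSemigroup.lift (tauF E u v hE σ₀) u) : QQ E) = ↑u :=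
      lift_coe_eq E fun x hx => tauF_spec E u v hE (hσ₀some x (hu_mem x hx))
    have hco_v : (↑(FreeSemigroup.lift (tauF E u v hE σ₀) v) : QQ E) = ↑v :=
      lift_coe_eq E fun x hx => tauF_spec E u v hE (hσ₀some x (hv_mem x hx))
    rw [lift_eval E u v hE hnz_u, lift_eval E u v hE hnz_v,
      dif_eq_of_eq E u v hE hco_u, dif_eq_of_eq E u v hE hco_v] at hkey
    have hPu : PP E u v hE ↑u := by
      constructor
      · rw [lettersQ_mk, Multiset.coe_card]
        exact le_max_left _ _
      · intro x hx
        rw [lettersQ_mk, Multiset.mem_coe] at hx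
        exact hu_mem x hx
    have hPv : PP E u v hE ↑v := by
      constructor
      · rw [lettersQ_mk, Multiset.coe_card]
        exact le_max_right _ _
      · intro x hx
        rw [lettersQ_mk, Multiset.mem_coe] at hx
        exact hv_mem x hx
    rw [dif_pos hPu, dif_pos hPv] at hkey
    have huv : (↑u : QQ E) = ↑v := congrArg Subtype.val (Option.some.inj hkey)
    exact (Con.eq _).mp huv
  exact ⟨hQuv, fun S hS => all_of_con E u v hS hQuv⟩
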